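/- Let β, r, θ, c > 0. The map V₁ has a unique positive fixed point (a point (u,v) with u > 0, v > 0 and V₁(u,v) = (u,v)) if and only if β > r and 0 < θ < (β - r)(1+c). In that case the fixed point is (ū, 1-ū) with ū = (r c + θ - β + √((β - r c - θ)² + 4 r c β))/(2 c β), and 0 < ū < 1. -/

import Mathlib

/-- The map `V₁(u,v) = (u(2-u) - u v, β u v + (1-r) v - θ u v/(1 + c u))`
(Holling type II toxin distribution). -/
noncomputable def V1 (β r θ c : ℝ) (p : ℝ × ℝ) : ℝ × ℝ :=
  (p.1 * (2 - p.1) - p.1 * p.2,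
   β * p.1 * p.2 + (1 - r) * p.2 - θ * p.1 * p.2 / (1 + c * p.1))

/-- The positive abscissa `ū = (rc + θ - β + √((β - rc - θ)² + 4rcβ))/(2cβ)`. -/
noncomputable def ubar (β r θ c : ℝ) : ℝ :=
  (r * c + θ - β + Real.sqrt ((β - r * c - θ) ^ 2 + 4 * r * c * β)) / (2 * c * β)

lemma ubar_props (β r θ c : ℝ) (hβ : 0 < β) (hr : 0 < r) (hθ : 0 < θ) (hc : 0 < c) :
    0 < ubar β r θ c ∧
    c*β*(ubar β r θ c)^2 + (β - r*c - θ)*(ubar β r θ c) - r = 0 ∧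
    (∀ u : ℝ, 0 < u → c*β*u^2 + (β - r*c - θ)*u - r = 0 → u = ubar β r θ c) ∧
    (ubar β r θ c < 1 ↔ θ < (β - r)*(1+c)) := by
  have hD : 0 ≤ (β - r*c - θ)^2 + 4*r*c*β := by positivity
  set s := Real.sqrt ((β - r*c - θ)^2 + 4*r*c*β) with hs
  have hs2 : s^2 = (β - r*c - θ)^2 + 4*r*c*β := Real.sq_sqrt hD
  have hs0 : 0 ≤ s := Real.sqrt_nonneg _
  have h1 : β - r*c - θ < s := by nlinarith [mul_pos (mul_pos hr hc) hβ, hs2, hs0, sq_nonneg (s - (β - r*c - θ)), sq_nonneg (s + (β - r*c - θ))]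
  have h2 : -(β - r*c - θ) < s := by nlinarith [mul_pos (mul_pos hr hc) hβ, hs2, hs0, sq_nonneg (s - (β - r*c - θ)), sq_nonneg (s + (β - r*c - θ))]
  have hden : (0:ℝ) < 2*c*β := by positivity
  have hu0 : ubar β r θ c = (r*c + θ - β + s)/(2*c*β) := by rw [ubar, hs]
  have hupos : 0 < ubar β r θ c := by
    rw [hu0]; apply div_pos; linarith; exact hden
  have hroot : c*β*(ubar β r θ c)^2 + (β - r*c - θ)*(ubar β r θ c) - r = 0 := by
    rw [hu0]; field_simp; nlinarith [hs2]
  have hcb : c*β*(ubar β r θ c) = (r*c+θ-β+s)/2 := by rw [hu0]; field_simp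
  refine ⟨hupos, hroot, ?_, ?_⟩
  · intro u hu hequ
    have hfac : (u - ubar β r θ c) * (c*β*(u + ubar β r θ c) + (β - r*c - θ)) = 0 := by
      linear_combination hequ - hroot
    have hpos2 : 0 < c*β*(u + ubar β r θ c) + (β - r*c - θ) := by
      nlinarith [mul_pos (mul_pos hc hβ) hu]
    rcases mul_eq_zero.1 hfac with h | h
    · linarith
    · linarith
  · have hkey : (β - r)*(1+c) - θ =
        (1 - ubar β r θ c) * (c*β*(1 + ubar β r θ c) + (β - r*c - θ)) := by
      linear_combination hroot
    have hpos2 : 0 < c*β*(1 + ubar β r θ c) + (β - r*c - θ) := by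
      nlinarith [mul_pos hc hβ]
    constructor
    · intro h; nlinarith
    · intro h; nlinarith

lemma fixed_eq (β r θ c : ℝ) (hc : 0 < c) (p : ℝ × ℝ) (h1 : 0 < p.1) (h2 : 0 < p.2)
    (hV : V1 β r θ c p = p) :
    p.2 = 1 - p.1 ∧ c*β*p.1^2 + (β - r*c - θ)*p.1 - r = 0 := by
  obtain ⟨u, v⟩ := p
  simp only [V1, Prod.mk.injEq] at hV
  simp only at h1 h2 ⊢
  obtain ⟨e1, e2⟩ := hV
  have hcu : (0:ℝ) < 1 + c*u := by nlinarith
  have hv : v = 1 - u := by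
    have h : u * (1 - u - v) = 0 := by linear_combination e1
    rcases mul_eq_zero.1 h with h | h
    · exact absurd h (ne_of_gt h1)
    · linarith
  refine ⟨hv, ?_⟩
  have e2' : β*u*v*(1+c*u) + (1-r)*v*(1+c*u) - θ*u*v = v*(1+c*u) := by
    field_simp at e2
    linear_combination v * e2
  have h : v * (c*β*u^2 + (β - r*c - θ)*u - r) = 0 := by linear_combination e2'
  rcases mul_eq_zero.1 h with h | h
  · exact absurd h (ne_of_gt h2)
  · exact h

lemma char_lemma (β r θ c : ℝ) (hβ : 0 < β) (hr : 0 < r) (hθ : 0 < θ) (hc : 0 < c)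
    (hrβ : r < β) (hθ' : θ < (β - r) * (1 + c)) :
    0 < ubar β r θ c ∧ ubar β r θ c < 1 ∧
    ∀ p : ℝ × ℝ, (0 < p.1 ∧ 0 < p.2 ∧ V1 β r θ c p = p) ↔
      p = (ubar β r θ c, 1 - ubar β r θ c) := by
  obtain ⟨hpos, hroot, huniq, hiff⟩ := ubar_props β r θ c hβ hr hθ hc
  have hlt : ubar β r θ c < 1 := hiff.2 hθ'
  refine ⟨hpos, hlt, fun p => ⟨?_, ?_⟩⟩
  · rintro ⟨h1, h2, hV⟩
    obtain ⟨hv, hf⟩ := fixed_eq β r θ c hc p h1 h2 hV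
    have hu : p.1 = ubar β r θ c := huniq _ h1 hf
    exact Prod.ext hu (by rw [hv, hu])
  · rintro rfl
    refine ⟨hpos, by simpa using (by linarith : ubar β r θ c < 1), ?_⟩
    set u := ubar β r θ c with hu
    have hcu : (0:ℝ) < 1 + c*u := by nlinarith
    simp only [V1, Prod.mk.injEq]
    constructor
    · ring
    · field_simp
      linear_combination (1 - u) * hroot

/-- `V₁` has a unique positive fixed point iff `β > r` and `0 < θ < (β-r)(1+c)`;
in that case the fixed point is `(ū, 1-ū)` with `0 < ū < 1`. -/
theorem unique_positive_fixed_point_V1 (β r θ c : ℝ) (hβ : 0 < β) (hr : 0 < r)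
    (hθ : 0 < θ) (hc : 0 < c) :
    ((∃! p : ℝ × ℝ, 0 < p.1 ∧ 0 < p.2 ∧ V1 β r θ c p = p) ↔
      (r < β ∧ 0 < θ ∧ θ < (β - r) * (1 + c))) ∧
    (r < β → θ < (β - r) * (1 + c) →
      0 < ubar β r θ c ∧ ubar β r θ c < 1 ∧
      ∀ p : ℝ × ℝ, (0 < p.1 ∧ 0 < p.2 ∧ V1 β r θ c p = p) ↔
        p = (ubar β r θ c, 1 - ubar β r θ c)) := by
  constructor
  · constructor
    · rintro ⟨p, ⟨h1, h2, hV⟩, -⟩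
      obtain ⟨hpos, hroot, huniq, hiff⟩ := ubar_props β r θ c hβ hr hθ hc
      obtain ⟨hv, hf⟩ := fixed_eq β r θ c hc p h1 h2 hV
      have hu : p.1 = ubar β r θ c := huniq _ h1 hf
      have hlt : ubar β r θ c < 1 := by rw [← hu]; linarith
      have hθ' := hiff.1 hlt
      exact ⟨by nlinarith, hθ, hθ'⟩
    · rintro ⟨hrβ, -, hθ'⟩
      obtain ⟨hpos, hlt, hiff⟩ := char_lemma β r θ c hβ hr hθ hc hrβ hθ'
      exact ⟨(ubar β r θ c, 1 - ubar β r θ c), (hiff _).2 rfl, fun q hq => (hiff q).1 hq⟩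
  · intro hrβ hθ'
    exact char_lemma β r θ c hβ hr hθ hc hrβ hθ'
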